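/- Let k, N be positive integers and p a prime. If n, m are integers with n, m >= N and n ≡ m (mod p^{N-1}(p-1)), then B_n^{(-k)} ≡ B_m^{(-k)} (mod p^N). -/

import Mathlib

/-- Stirling numbers of the second kind. -/
def S2 : ℕ → ℕ → ℕ
  | 0, 0 => 1
  | 0, _ + 1 => 0
  | _ + 1, 0 => 0
  | n + 1, m + 1 => S2 n m + (m + 1) * S2 n (m + 1)
/-- Poly-Bernoulli number with negative upper index: `B_n^{(-k)}`. -/
def Bneg (n k : ℕ) : ℤ :=
  (-1 : ℤ) ^ n * ∑ m ∈ Finset.range (n + 1),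
    (-1 : ℤ) ^ m * (Nat.factorial m : ℤ) * (S2 n m : ℤ) * ((m : ℤ) + 1) ^ k

lemma S2_zero_succ (t : ℕ) : S2 0 (t+1) = 0 := rfl
lemma S2_succ_zero (n : ℕ) : S2 (n+1) 0 = 0 := rfl
lemma S2_succ_succ (n t : ℕ) : S2 (n+1) (t+1) = S2 n t + (t+1) * S2 n (t+1) := rfl

lemma key : ∀ n j : ℕ, (-1:ℤ)^j * (j.factorial : ℤ) * (S2 n j : ℤ)
    = ∑ i ∈ Finset.range (j+1), (-1:ℤ)^i * (j.choose i : ℤ) * (i:ℤ)^n := by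
  intro n
  induction n with
  | zero =>
    intro j
    match j with
    | 0 => simp [S2]
    | t+1 =>
      simp only [S2_zero_succ, Nat.cast_zero, mul_zero, pow_zero, mul_one]
      rw [Int.alternating_sum_range_choose_of_ne (Nat.succ_ne_zero t)]
  | succ n ih =>
    intro j
    match j with
    | 0 => simp [S2]
    | t+1 =>
      have hA := ih t
      have hB := ih (t+1)
      set D : ℤ := ∑ s ∈ Finset.range (t+1), (-1:ℤ)^s * (t.choose s : ℤ) * ((s:ℤ)+1)^n with hD
      set E : ℤ := ∑ s ∈ Finset.range (t+1), (-1:ℤ)^s * (t.choose (s+1) : ℤ) * ((s:ℤ)+1)^n with hE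
      have hEt : E = ∑ s ∈ Finset.range t, (-1:ℤ)^s * (t.choose (s+1) : ℤ) * ((s:ℤ)+1)^n := by
        rw [hE, Finset.sum_range_succ, Nat.choose_succ_self]
        simp
      have hAeq : ∑ i ∈ Finset.range (t+1), (-1:ℤ)^i * (t.choose i : ℤ) * (i:ℤ)^n
          = (0:ℤ)^n - E := by
        rw [Finset.sum_range_succ' (fun i => (-1:ℤ)^i * (t.choose i : ℤ) * (i:ℤ)^n) t, hEt]
        have hneg : ∀ s ∈ Finset.range t,
            (-1:ℤ)^(s+1) * (t.choose (s+1) : ℤ) * (((s:ℕ)+1 : ℕ):ℤ)^n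
            = -((-1:ℤ)^s * (t.choose (s+1) : ℤ) * ((s:ℤ)+1)^n) := by
          intro s _; push_cast; ring
        rw [Finset.sum_congr rfl hneg, Finset.sum_neg_distrib]
        simp only [Nat.choose_zero_right, Nat.cast_one, Nat.cast_zero, pow_zero, one_mul, mul_one]
        ring
      have hBeq : ∑ i ∈ Finset.range (t+2), (-1:ℤ)^i * ((t+1).choose i : ℤ) * (i:ℤ)^n
          = (0:ℤ)^n - D - E := by
        rw [Finset.sum_range_succ' (fun i => (-1:ℤ)^i * ((t+1).choose i : ℤ) * (i:ℤ)^n) (t+1)]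
        have hsp : ∀ s ∈ Finset.range (t+1),
            (-1:ℤ)^(s+1) * ((t+1).choose (s+1) : ℤ) * (((s:ℕ)+1 : ℕ):ℤ)^n
            = -((-1:ℤ)^s * (t.choose s : ℤ) * ((s:ℤ)+1)^n)
              - ((-1:ℤ)^s * (t.choose (s+1) : ℤ) * ((s:ℤ)+1)^n) := by
          intro s _
          rw [Nat.choose_succ_succ]
          push_cast
          ring
        rw [Finset.sum_congr rfl hsp, Finset.sum_sub_distrib, Finset.sum_neg_distrib, ← hD, ← hE]
        simp only [Nat.choose_zero_right, Nat.cast_one, Nat.cast_zero, pow_zero, one_mul, mul_one]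
        ring
      have hRHS : ∑ i ∈ Finset.range (t+2), (-1:ℤ)^i * ((t+1).choose i : ℤ) * (i:ℤ)^(n+1)
          = -((t:ℤ)+1) * D := by
        rw [Finset.sum_range_succ' (fun i => (-1:ℤ)^i * ((t+1).choose i : ℤ) * (i:ℤ)^(n+1)) (t+1)]
        have hsp : ∀ s ∈ Finset.range (t+1),
            (-1:ℤ)^(s+1) * ((t+1).choose (s+1) : ℤ) * (((s:ℕ)+1 : ℕ):ℤ)^(n+1)
            = (-((t:ℤ)+1)) * ((-1:ℤ)^s * (t.choose s : ℤ) * ((s:ℤ)+1)^n) := by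
          intro s _
          have h1 : ((t:ℤ)+1) * (t.choose s : ℤ) = ((t+1).choose (s+1) : ℤ) * ((s:ℤ)+1) := by
            exact_mod_cast congrArg (Nat.cast : ℕ → ℤ) (Nat.add_one_mul_choose_eq t s)
          push_cast
          calc (-1:ℤ)^(s+1) * ((t+1).choose (s+1) : ℤ) * ((s:ℤ)+1)^(n+1)
              = -((-1:ℤ)^s * ((s:ℤ)+1)^n) * (((t+1).choose (s+1) : ℤ) * ((s:ℤ)+1)) := by ring
            _ = -((-1:ℤ)^s * ((s:ℤ)+1)^n) * (((t:ℤ)+1) * (t.choose s : ℤ)) := by rw [← h1]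
            _ = (-((t:ℤ)+1)) * ((-1:ℤ)^s * (t.choose s : ℤ) * ((s:ℤ)+1)^n) := by ring
        rw [Finset.sum_congr rfl hsp, ← Finset.mul_sum, ← hD]
        simp only [Nat.choose_zero_right, Nat.cast_one, Nat.cast_zero, pow_zero, one_mul, mul_one]
        rw [zero_pow (Nat.succ_ne_zero n)]
        ring
      rw [hAeq] at hA
      rw [hBeq] at hB
      rw [hRHS, S2_succ_succ]
      push_cast [Nat.factorial_succ] at hA hB ⊢
      linear_combination (-((t:ℤ)+1)) * hA + ((t:ℤ)+1) * hB

lemma S2_eq_zero : ∀ n j : ℕ, n < j → S2 n j = 0 := by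
  intro n
  induction n with
  | zero => intro j hj; match j, hj with | t+1, _ => rfl
  | succ n ih =>
    intro j hj
    match j, hj with
    | t+1, hj =>
      rw [S2_succ_succ, ih t (by omega), ih (t+1) (by omega)]
      simp

lemma Bneg_eq (n k M : ℕ) (h : n ≤ M) :
    Bneg n k = ∑ j ∈ Finset.range (M+1), ∑ i ∈ Finset.range (j+1),
      ((-1:ℤ)^i * (j.choose i : ℤ) * ((j:ℤ)+1)^k) * (-(i:ℤ))^n := by
  unfold Bneg
  have h1 : ∑ j ∈ Finset.range (n+1), (-1:ℤ)^j * (j.factorial : ℤ) * (S2 n j : ℤ) * ((j:ℤ)+1)^k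
      = ∑ j ∈ Finset.range (M+1), (-1:ℤ)^j * (j.factorial : ℤ) * (S2 n j : ℤ) * ((j:ℤ)+1)^k := by
    apply Finset.sum_subset (Finset.range_subset_range.mpr (by omega))
    intro j _ hj
    rw [S2_eq_zero n j (by simp at hj ⊢; omega)]
    simp
  rw [h1, Finset.mul_sum]
  apply Finset.sum_congr rfl
  intro j _
  rw [key n j, Finset.sum_mul, Finset.mul_sum]
  apply Finset.sum_congr rfl
  intro i _
  rw [neg_pow]
  ring

lemma pow_key (p N : ℕ) (hp : p.Prime) (hN : 0 < N) (n m : ℕ) (hn : N ≤ n) (hm : N ≤ m)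
    (hnm : n ≡ m [MOD p ^ (N - 1) * (p - 1)]) (b : ℤ) :
    ((b : ZMod (p^N)))^n = (b : ZMod (p^N))^m := by
  haveI : NeZero (p^N) := ⟨pow_ne_zero N hp.ne_zero⟩
  by_cases hdvd : (p:ℤ) ∣ b
  · have key0 : ∀ l : ℕ, N ≤ l → (b : ZMod (p^N))^l = 0 := by
      intro l hl
      have : ((b^l : ℤ) : ZMod (p^N)) = 0 := by
        rw [ZMod.intCast_zmod_eq_zero_iff_dvd]
        calc ((p^N : ℕ) : ℤ) = (p:ℤ)^N := by push_cast; ring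
          _ ∣ (p:ℤ)^l := pow_dvd_pow _ hl
          _ ∣ b^l := pow_dvd_pow_of_dvd hdvd l
      rwa [Int.cast_pow] at this
    rw [key0 n hn, key0 m hm]
  · set x : ZMod (p^N) := (b : ZMod (p^N)) with hx
    have hvx : ((x.val : ℕ) : ZMod (p^N)) = x := ZMod.natCast_rightInverse x
    have hpv : ¬ p ∣ x.val := by
      intro hpv
      apply hdvd
      have h1 : ((x.val : ℤ) : ZMod (p^N)) = (b : ZMod (p^N)) := by
        push_cast; rw [hvx]
      have h2 : (x.val : ℤ) ≡ b [ZMOD (p^N : ℕ)] := (ZMod.intCast_eq_intCast_iff _ _ _).mp h1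
      have h3 : (p : ℤ) ∣ (p^N : ℕ) := by
        push_cast
        exact dvd_pow_self _ hN.ne'
      have h4 : (p:ℤ) ∣ b - (x.val : ℤ) := dvd_trans h3 (Int.ModEq.dvd h2)
      have h5 : (p:ℤ) ∣ (x.val : ℤ) := Int.natCast_dvd_natCast.mpr hpv
      have := dvd_add h4 h5
      simpa using this
    have hco : Nat.Coprime (x.val) (p^N) :=
      Nat.Coprime.pow_right _ ((Nat.coprime_comm.mp ((hp.coprime_iff_not_dvd).mpr hpv)))
    have hu : IsUnit x := by
      rw [← hvx]
      exact (ZMod.isUnit_iff_coprime _ _).mpr hco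
    obtain ⟨u, hu⟩ := hu
    have hord : orderOf u ∣ p ^ (N - 1) * (p - 1) := by
      have h1 : orderOf u ∣ Fintype.card (ZMod (p^N))ˣ := orderOf_dvd_card
      rwa [ZMod.card_units_eq_totient, Nat.totient_prime_pow hp hN] at h1
    have hmod : n ≡ m [MOD orderOf u] := Nat.ModEq.of_dvd hord hnm
    have : u ^ n = u ^ m := pow_eq_pow_iff_modEq.mpr hmod
    rw [← hu, ← Units.val_pow_eq_pow_val, ← Units.val_pow_eq_pow_val, this]

/-- Periodicity of poly-Bernoulli numbers with negative upper index. -/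
theorem polyBernoulli_neg_periodicity (k N : ℕ) (hk : 0 < k) (hN : 0 < N)
    (p : ℕ) (hp : p.Prime) (n m : ℕ) (hn : N ≤ n) (hm : N ≤ m)
    (hnm : n ≡ m [MOD p ^ (N - 1) * (p - 1)]) :
    Bneg n k ≡ Bneg m k [ZMOD (p : ℤ) ^ N] := by
  have h : ((Bneg n k : ℤ) : ZMod (p^N)) = ((Bneg m k : ℤ) : ZMod (p^N)) := by
    rw [Bneg_eq n k (max n m) (le_max_left _ _), Bneg_eq m k (max n m) (le_max_right _ _)]
    push_cast
    apply Finset.sum_congr rfl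
    intro j _
    apply Finset.sum_congr rfl
    intro i _
    congr 1
    have := pow_key p N hp hN n m hn hm hnm (-(i:ℤ))
    push_cast at this
    exact this
  have h2 := (ZMod.intCast_eq_intCast_iff _ _ _).mp h
  rwa [Nat.cast_pow] at h2
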